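/- For n = 3k (k a positive integer), the set S of strings of length k over {a,b,c} of the form a^i b^j c^m (with i+j+m = k) has binomial(k+2, 2) elements, and no two distinct members x, y of S satisfy x ≡_{EQUAL3,n,k} y. -/

import Mathlib

/-- `EQUAL3`: strings over `{a,b,c}` (modeled as `Fin 3`, with `a = 0`, `b = 1`, `c = 2`)
with equally many occurrences of each symbol. -/
def EQUAL3 (w : List (Fin 3)) : Prop :=
  w.count (0 : Fin 3) = w.count (1 : Fin 3) ∧ w.count (1 : Fin 3) = w.count (2 : Fin 3)

private def F3 (t : ℕ × ℕ × ℕ) : List (Fin 3) :=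
  List.replicate t.1 (0 : Fin 3) ++ List.replicate t.2.1 (1 : Fin 3) ++
    List.replicate t.2.2 (2 : Fin 3)

private lemma count_F3 (i j m : ℕ) :
    (F3 (i, j, m)).count (0 : Fin 3) = i ∧ (F3 (i, j, m)).count (1 : Fin 3) = j ∧
      (F3 (i, j, m)).count (2 : Fin 3) = m := by
  refine ⟨?_, ?_, ?_⟩ <;>
    simp [F3, List.count_append, List.count_replicate]

private lemma F3_inj : Function.Injective F3 := by
  rintro ⟨i, j, m⟩ ⟨i', j', m'⟩ h
  obtain ⟨h0, h1, h2⟩ := count_F3 i j m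
  obtain ⟨h0', h1', h2'⟩ := count_F3 i' j' m'
  rw [h] at h0 h1 h2
  simp only [Prod.mk.injEq]
  omega

theorem equal3_prefixes (k n : ℕ) (hk : 0 < k) (hn : n = 3 * k) :
    ({w : List (Fin 3) | ∃ i j m : ℕ, i + j + m = k ∧
        w = List.replicate i (0 : Fin 3) ++ List.replicate j (1 : Fin 3) ++
            List.replicate m (2 : Fin 3)}.ncard = (k + 2).choose 2) ∧
    (∀ x y : List (Fin 3),
      (∃ i j m : ℕ, i + j + m = k ∧
        x = List.replicate i (0 : Fin 3) ++ List.replicate j (1 : Fin 3) ++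
            List.replicate m (2 : Fin 3)) →
      (∃ i j m : ℕ, i + j + m = k ∧
        y = List.replicate i (0 : Fin 3) ++ List.replicate j (1 : Fin 3) ++
            List.replicate m (2 : Fin 3)) →
      (∀ z : List (Fin 3), z.length = n - k → (EQUAL3 (x ++ z) ↔ EQUAL3 (y ++ z))) →
      x = y) := by
  constructor
  · -- cardinality
    classical
    set A : Finset (ℕ × ℕ × ℕ) :=
      (Finset.HasAntidiagonal.antidiagonal k).biUnion
        (fun p => (Finset.HasAntidiagonal.antidiagonal p.2).image (fun q => (p.1, q))) with hA
    have hmemA : ∀ t : ℕ × ℕ × ℕ, t ∈ A ↔ t.1 + t.2.1 + t.2.2 = k := by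
      rintro ⟨i, j, m⟩
      simp only [hA, Finset.mem_biUnion, Finset.mem_image, Finset.HasAntidiagonal.mem_antidiagonal,
        Prod.exists, Prod.mk.injEq]
      constructor
      · rintro ⟨a, b, hab, c, d, hcd, rfl, rfl, rfl⟩; omega
      · intro h; exact ⟨i, j + m, by omega, j, m, rfl, rfl, rfl, rfl⟩
    have hset : {w : List (Fin 3) | ∃ i j m : ℕ, i + j + m = k ∧
        w = List.replicate i (0 : Fin 3) ++ List.replicate j (1 : Fin 3) ++
            List.replicate m (2 : Fin 3)} = F3 '' ↑A := by
      ext w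
      simp only [Set.mem_setOf_eq, Set.mem_image, Finset.mem_coe]
      constructor
      · rintro ⟨i, j, m, hs, rfl⟩
        exact ⟨(i, j, m), (hmemA _).2 hs, rfl⟩
      · rintro ⟨⟨i, j, m⟩, ht, rfl⟩
        exact ⟨i, j, m, (hmemA _).1 ht, rfl⟩
    rw [hset, Set.ncard_image_of_injective _ F3_inj, Set.ncard_coe_finset]
    have hdisj : ∀ p ∈ Finset.HasAntidiagonal.antidiagonal k, ∀ q ∈ Finset.HasAntidiagonal.antidiagonal k, p ≠ q →
        Disjoint ((Finset.HasAntidiagonal.antidiagonal p.2).image (fun r => (p.1, r)))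
          ((Finset.HasAntidiagonal.antidiagonal q.2).image (fun r => (q.1, r))) := by
      rintro ⟨a, b⟩ hp ⟨c, d⟩ hq hne
      simp only [Finset.HasAntidiagonal.mem_antidiagonal] at hp hq
      rw [Finset.disjoint_left]
      rintro ⟨i, r⟩ h1 h2
      simp only [Finset.mem_image, Finset.HasAntidiagonal.mem_antidiagonal, Prod.exists,
        Prod.mk.injEq] at h1 h2
      obtain ⟨x, y, hxy, rfl, rfl, rfl⟩ := h1
      obtain ⟨x', y', hxy', h1', h2', h3'⟩ := h2
      apply hne
      simp only [Prod.mk.injEq]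
      omega
    rw [hA, Finset.card_biUnion hdisj]
    have hcard : ∀ p ∈ Finset.HasAntidiagonal.antidiagonal k,
        ((Finset.HasAntidiagonal.antidiagonal p.2).image (fun r => (p.1, r))).card = p.2 + 1 := by
      intro p _
      rw [Finset.card_image_of_injective _ (fun a b h => by simpa using h),
        Finset.Nat.card_antidiagonal]
    rw [Finset.sum_congr rfl hcard, Finset.Nat.sum_antidiagonal_eq_sum_range_succ_mk]
    have key : ∑ i ∈ Finset.range (k + 1), (k - i + 1) = ∑ i ∈ Finset.range (k + 2), i := by
      rw [← Finset.sum_range_reflect (fun i => k - i + 1) (k + 1),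
        Finset.sum_range_succ' (fun i => i) (k + 1)]
      simp only [add_zero]
      apply Finset.sum_congr rfl
      intro i hi
      simp only [Finset.mem_range] at hi
      omega
    rw [key, Finset.sum_range_id, Nat.choose_two_right]
  · -- distinguishability
    rintro x y ⟨i, j, m, hs, rfl⟩ ⟨i', j', m', hs', rfl⟩ h
    set z : List (Fin 3) := F3 (k - i, k - j, k - m) with hzdef
    have hlen : z.length = n - k := by
      simp only [hzdef, F3, List.length_append, List.length_replicate]; omega
    have hE : ∀ a b c : ℕ, EQUAL3 (F3 (a, b, c) ++ z) ↔
        (a + (k - i) = b + (k - j) ∧ b + (k - j) = c + (k - m)) := by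
      intro a b c
      unfold EQUAL3
      rw [List.count_append, List.count_append, List.count_append,
        (count_F3 a b c).1, (count_F3 a b c).2.1, (count_F3 a b c).2.2,
        (count_F3 (k - i) (k - j) (k - m)).1, (count_F3 (k - i) (k - j) (k - m)).2.1,
        (count_F3 (k - i) (k - j) (k - m)).2.2]
    have hxz : EQUAL3 (F3 (i, j, m) ++ z) := (hE i j m).2 ⟨by omega, by omega⟩
    have hyz : EQUAL3 (F3 (i', j', m') ++ z) := (h z hlen).1 hxz
    obtain ⟨e1, e2⟩ := (hE i' j' m').1 hyz
    have : i' = i ∧ j' = j ∧ m' = m := by omega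
    obtain ⟨rfl, rfl, rfl⟩ := this
    rfl
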